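/- arXiv:1904.07365 — 5 statements merged into one kernel-verified Lean document; each statement's English description precedes it below -/
import Mathlib

section
/- Let N ≥ 1, let H_S be an N×N Hermitian complex matrix, let g > 0, γ > 0, ε ∈ ℝ, and let G(t) = g² e^{-(γ/2)t - iεt}. Suppose ψ : ℝ → ℂ^N is continuously differentiable and satisfies, for all t ≥ 0, ψ'(t) = -i H_S ψ(t) - ∫₀ᵗ G(t-s) ψ(s) ds. Define φ(t) = -i g ∫₀ᵗ e^{-(γ/2 + iε)(t-s)} ψ(s) ds. Then the combined vector ψ̃(t) = ψ(t) ⊕ φ(t) ∈ ℂ^{2N} satisfies the linear ODE ψ̃'(t) = -i H_eff ψ̃(t) for all t ≥ 0, where H_eff is the 2N×2N block matrix with blocks [[H_S, g·I_N], [g·I_N, (ε - iγ/2)·I_N]], and the initial condition is ψ̃(0) = ψ(0) ⊕ 0. -/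
open Matrix Complex

noncomputable section

theorem stmt0 (N : ℕ) (hN : 1 ≤ N)
    (H_S : Matrix (Fin N) (Fin N) ℂ) (hH : H_S.IsHermitian)
    (g γ ε : ℝ) (hg : 0 < g) (hγ : 0 < γ)
    (G : ℝ → ℂ)
    (hG : ∀ t : ℝ, G t = (g : ℂ) ^ 2 * Complex.exp (-(γ / 2 : ℝ) * t - Complex.I * ε * t))
    (ψ : ℝ → Fin N → ℂ) (hψC : ContDiff ℝ 1 ψ)
    (hψ : ∀ t : ℝ, 0 ≤ t → HasDerivAt ψ
      ((-Complex.I) • H_S.mulVec (ψ t) - ∫ s in (0:ℝ)..t, G (t - s) • ψ s) t)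
    (φ : ℝ → Fin N → ℂ)
    (hφ : ∀ t : ℝ, φ t = (-Complex.I * g) • ∫ s in (0:ℝ)..t,
      Complex.exp (-((γ / 2 : ℝ) + Complex.I * ε) * (t - s)) • ψ s)
    (ψt : ℝ → (Fin N ⊕ Fin N) → ℂ)
    (hψt : ∀ t, ψt t = Sum.elim (ψ t) (φ t))
    (Heff : Matrix (Fin N ⊕ Fin N) (Fin N ⊕ Fin N) ℂ)
    (hHeff : Heff = Matrix.fromBlocks H_S ((g : ℂ) • 1) ((g : ℂ) • 1)
      (((ε : ℂ) - Complex.I * γ / 2) • 1)) :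
    (∀ t : ℝ, 0 ≤ t → HasDerivAt ψt ((-Complex.I) • Heff.mulVec (ψt t)) t)
    ∧ ψt 0 = Sum.elim (ψ 0) 0 := by
  set a : ℂ := ((γ / 2 : ℝ) : ℂ) + Complex.I * ε with ha
  have hψcont : Continuous ψ := hψC.continuous
  have hcontF : Continuous fun s : ℝ => Complex.exp (a * s) • ψ s :=
    (Complex.continuous_exp.comp (continuous_const.mul Complex.continuous_ofReal)).smul hψcont
  set F : ℝ → Fin N → ℂ := fun t => ∫ s in (0:ℝ)..t, Complex.exp (a * s) • ψ s with hF
  have hFder : ∀ t : ℝ, HasDerivAt F (Complex.exp (a * t) • ψ t) t := by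
    intro t
    exact intervalIntegral.integral_hasDerivAt_right (hcontF.intervalIntegrable 0 t)
      (hcontF.stronglyMeasurableAtFilter _ _) hcontF.continuousAt
  have hφ' : ∀ t : ℝ, φ t = (-Complex.I * g) • (Complex.exp (-a * t) • F t) := by
    intro t
    rw [hφ t, hF]
    congr 1
    rw [← intervalIntegral.integral_smul]
    apply intervalIntegral.integral_congr
    intro s _
    simp only [smul_smul, ← Complex.exp_add]
    congr 2
    push_cast [ha]
    ring
  have hφder : ∀ t : ℝ, HasDerivAt φ ((-Complex.I * g) • ψ t - a • φ t) t := by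
    intro t
    have he : HasDerivAt (fun t : ℝ => Complex.exp (-a * t)) (-a * Complex.exp (-a * t)) t := by
      have := (((hasDerivAt_id (t : ℂ)).const_mul (-a)).cexp).comp_ofReal
      simpa [mul_comm] using this
    have h := ((he.smul (hFder t)).const_smul (-Complex.I * (g : ℂ)))
    have hfun : φ = fun t : ℝ => (-Complex.I * g) • (Complex.exp (-a * t) • F t) := funext hφ'
    rw [hfun]
    refine h.congr_deriv ?_
    have h2 : Complex.exp (-a * t) * Complex.exp (a * t) = 1 := by
      rw [← Complex.exp_add]; norm_num
    simp only [smul_smul, smul_add, h2, one_smul]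
    module
  have hint : ∀ t : ℝ, (∫ s in (0:ℝ)..t, G (t - s) • ψ s) = (Complex.I * g) • φ t := by
    intro t
    rw [hφ t, smul_smul]
    have hc : Complex.I * g * (-Complex.I * g) = (g : ℂ) ^ 2 := by
      have := Complex.I_mul_I
      ring_nf
      rw [Complex.I_sq]
      ring
    rw [hc, ← intervalIntegral.integral_smul]
    apply intervalIntegral.integral_congr
    intro s _
    simp only [hG, smul_smul, smul_eq_mul]
    congr 2
    push_cast [ha]
    ring
  constructor
  · intro t ht
    have hDψ := hψ t ht
    have hDφ := hφder t
    rw [show ψt = fun t => Sum.elim (ψ t) (φ t) from funext hψt]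
    have key : HasDerivAt (fun t => Sum.elim (ψ t) (φ t))
        (Sum.elim ((-Complex.I) • H_S.mulVec (ψ t) - (Complex.I * g) • φ t)
          ((-Complex.I * g) • ψ t - a • φ t)) t := by
      rw [hasDerivAt_pi]
      intro i
      cases i with
      | inl j =>
        have := hasDerivAt_pi.mp hDψ j
        rw [hint t] at this
        simpa using this
      | inr j => simpa using hasDerivAt_pi.mp hDφ j
    convert key using 1
    rw [hHeff, Matrix.fromBlocks_mulVec]
    funext i
    cases i with
    | inl j =>
      simp [Matrix.smul_mulVec, Matrix.one_mulVec, Pi.smul_apply, smul_eq_mul,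
        Pi.sub_apply, Pi.add_apply]
      ring
    | inr j =>
      simp [Matrix.smul_mulVec, Matrix.one_mulVec, Pi.smul_apply, smul_eq_mul,
        Pi.sub_apply, Pi.add_apply, ha]
      push_cast
      ring_nf
      rw [Complex.I_sq]
      ring
  · rw [hψt 0, hφ 0]
    simp
end
end

section
/- Let N ≥ 1, let H_S be an N×N Hermitian complex matrix, let g > 0, γ > 0, ε ∈ ℝ, and let G(t) = g² e^{-(γ/2)t - iεt}. Suppose ψ : ℝ → ℂ^N is continuously differentiable and satisfies ψ'(t) = -i H_S ψ(t) - ∫₀ᵗ G(t-s) ψ(s) ds for all t ≥ 0, and set φ(t) = -i g ∫₀ᵗ e^{-(γ/2 + iε)(t-s)} ψ(s) ds. Then the vector ψ̃_I(t) = e^{i H_S t} ψ(t) ⊕ e^{i H_S t} φ(t) ∈ ℂ^{2N} satisfies ψ̃_I'(t) = -i H_{I,eff} ψ̃_I(t) for all t ≥ 0, where H_{I,eff} is the 2N×2N block matrix with blocks [[0, g·I_N], [g·I_N, -H_S + (ε - iγ/2)·I_N]], with initial condition ψ̃_I(0) = ψ(0) ⊕ 0. -/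
open Matrix Complex

noncomputable section

attribute [local instance] Matrix.linftyOpNormedRing Matrix.linftyOpNormedAlgebra

namespace Stmt1Aux

variable {N : ℕ}

lemma hasDerivAt_entry {A : ℝ → Matrix (Fin N) (Fin N) ℂ} {A' : Matrix (Fin N) (Fin N) ℂ}
    {t : ℝ} (h : HasDerivAt A A' t) (i j : Fin N) :
    HasDerivAt (fun s => A s i j) (A' i j) t := by
  let L : Matrix (Fin N) (Fin N) ℂ →ₗ[ℂ] ℂ :=
    { toFun := fun M => M i j, map_add' := fun _ _ => rfl, map_smul' := fun _ _ => rfl }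
  have hL : HasFDerivAt (fun M : Matrix (Fin N) (Fin N) ℂ => M i j)
      (L.toContinuousLinearMap.restrictScalars ℝ) (A t) :=
    (L.toContinuousLinearMap.restrictScalars ℝ).hasFDerivAt
  have := hL.comp_hasDerivAt t h
  exact this

lemma hasDerivAt_mulVec {A : ℝ → Matrix (Fin N) (Fin N) ℂ} {A' : Matrix (Fin N) (Fin N) ℂ}
    {x : ℝ → Fin N → ℂ} {x' : Fin N → ℂ} {t : ℝ}
    (hA : HasDerivAt A A' t) (hx : HasDerivAt x x' t) :
    HasDerivAt (fun s => (A s).mulVec (x s)) (A'.mulVec (x t) + (A t).mulVec x') t := by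
  rw [hasDerivAt_pi]
  intro i
  have hxj : ∀ j, HasDerivAt (fun s => x s j) (x' j) t := fun j => hasDerivAt_pi.mp hx j
  have hsum : HasDerivAt (fun s => ∑ j, A s i j * x s j)
      (∑ j, (A' i j * x t j + A t i j * x' j)) t :=
    HasDerivAt.fun_sum fun j _ => (hasDerivAt_entry hA i j).mul (hxj j)
  have h1 : (fun s => ((A s).mulVec (x s)) i) = fun s => ∑ j, A s i j * x s j := by
    funext s; simp [Matrix.mulVec, dotProduct]
  have h2 : (A'.mulVec (x t) + (A t).mulVec x') i
      = ∑ j, (A' i j * x t j + A t i j * x' j) := by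
    simp [Matrix.mulVec, dotProduct, Finset.sum_add_distrib]
  rw [h1, h2]
  exact hsum

lemma hasDerivAt_expMat (H : Matrix (Fin N) (Fin N) ℂ) (t : ℝ) :
    HasDerivAt (fun s : ℝ => NormedSpace.exp ((Complex.I * s) • H))
      (NormedSpace.exp ((Complex.I * t) • H) * (Complex.I • H)) t := by
  have key : ∀ s : ℝ, (Complex.I * s) • H = (s : ℂ) • (Complex.I • H) := by
    intro s; rw [smul_smul, mul_comm]
  have h := hasDerivAt_exp_smul_const (𝕂 := ℂ) (Complex.I • H) (t : ℂ)
  have hre : HasDerivAt (fun s : ℝ => (s : ℂ)) 1 t := by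
    exact Complex.ofRealCLM.hasDerivAt (x := t)
  have h2 := HasDerivAt.scomp (x := t) h hre
  simp only [Function.comp_def, one_smul] at h2
  simp only [key]
  exact h2

end Stmt1Aux

open Stmt1Aux

theorem stmt1 (N : ℕ) (hN : 1 ≤ N)
    (H_S : Matrix (Fin N) (Fin N) ℂ) (hH : H_S.IsHermitian)
    (g γ ε : ℝ) (hg : 0 < g) (hγ : 0 < γ)
    (G : ℝ → ℂ)
    (hG : ∀ t : ℝ, G t = (g : ℂ) ^ 2 * Complex.exp (-(γ / 2 : ℝ) * t - Complex.I * ε * t))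
    (ψ : ℝ → Fin N → ℂ) (hψC : ContDiff ℝ 1 ψ)
    (hψ : ∀ t : ℝ, 0 ≤ t → HasDerivAt ψ
      ((-Complex.I) • H_S.mulVec (ψ t) - ∫ s in (0:ℝ)..t, G (t - s) • ψ s) t)
    (φ : ℝ → Fin N → ℂ)
    (hφ : ∀ t : ℝ, φ t = (-Complex.I * g) • ∫ s in (0:ℝ)..t,
      Complex.exp (-((γ / 2 : ℝ) + Complex.I * ε) * (t - s)) • ψ s)
    (ψtI : ℝ → (Fin N ⊕ Fin N) → ℂ)
    (hψtI : ∀ t : ℝ, ψtI t = Sum.elim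
      ((NormedSpace.exp ((Complex.I * t) • H_S)).mulVec (ψ t))
      ((NormedSpace.exp ((Complex.I * t) • H_S)).mulVec (φ t)))
    (HIeff : Matrix (Fin N ⊕ Fin N) (Fin N ⊕ Fin N) ℂ)
    (hHIeff : HIeff = Matrix.fromBlocks 0 ((g : ℂ) • 1) ((g : ℂ) • 1)
      (-H_S + ((ε : ℂ) - Complex.I * γ / 2) • 1)) :
    (∀ t : ℝ, 0 ≤ t → HasDerivAt ψtI ((-Complex.I) • HIeff.mulVec (ψtI t)) t)
    ∧ ψtI 0 = Sum.elim (ψ 0) 0 := by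
  -- common definitions
  set c : ℂ := ((γ / 2 : ℝ) : ℂ) + Complex.I * ε with hc
  set E : ℝ → Matrix (Fin N) (Fin N) ℂ :=
    fun s => NormedSpace.exp ((Complex.I * s) • H_S) with hE
  set F : ℝ → Fin N → ℂ :=
    fun u => ∫ s in (0:ℝ)..u, Complex.exp (c * s) • ψ s with hF
  -- closed form for φ
  have hφ2 : ∀ u : ℝ, φ u = (-Complex.I * g) • (Complex.exp (-(c * u)) • F u) := by
    intro u
    rw [hφ u]
    congr 1
    rw [hF, ← intervalIntegral.integral_smul]
    apply intervalIntegral.integral_congr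
    intro s _
    show Complex.exp (-c * ((u : ℂ) - (s : ℂ))) • ψ s
      = Complex.exp (-(c * u)) • Complex.exp (c * s) • ψ s
    rw [smul_smul, ← Complex.exp_add]
    congr 2
    push_cast
    ring
  constructor
  · intro t ht
    -- FTC for F
    have hcont : Continuous fun s : ℝ => Complex.exp (c * s) • ψ s := by
      exact (Complex.continuous_exp.comp (by continuity)).smul hψC.continuous
    have hFd : HasDerivAt F (Complex.exp (c * t) • ψ t) t :=
      intervalIntegral.integral_hasDerivAt_right (hcont.intervalIntegrable _ _)
        (hcont.stronglyMeasurableAtFilter _ _) hcont.continuousAt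
    -- derivative of the scalar factor
    have hsc : HasDerivAt (fun u : ℝ => Complex.exp (-(c * u)))
        (Complex.exp (-(c * t)) * (-c)) t := by
      have h0 : HasDerivAt (fun z : ℂ => -(c * z)) (-c) (t : ℂ) := by
        simpa using ((hasDerivAt_id (t : ℂ)).const_mul c).fun_neg
      have h1 : HasDerivAt (fun z : ℂ => Complex.exp (-(c * z)))
          (Complex.exp (-(c * (t : ℂ))) * (-c)) (t : ℂ) := h0.cexp
      exact h1.comp_ofReal
    -- derivative of φ
    have hφd : HasDerivAt φ ((-Complex.I * g) • ψ t + (-c) • φ t) t := by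
      have hprod : HasDerivAt (fun u : ℝ => Complex.exp (-(c * u)) • F u)
          (Complex.exp (-(c * t)) • (Complex.exp (c * t) • ψ t)
            + (Complex.exp (-(c * t)) * (-c)) • F t) t := hsc.smul hFd
      have := hprod.fun_const_smul (-Complex.I * (g : ℂ))
      have heq : (fun u : ℝ => (-Complex.I * (g : ℂ)) • (Complex.exp (-(c * u)) • F u)) = φ := by
        funext u; rw [hφ2 u]
      rw [heq] at this
      refine this.congr_deriv (Eq.symm ?_)
      rw [hφ2 t]
      have hee : Complex.exp (-(c * t)) • (Complex.exp (c * t) • ψ t) = ψ t := by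
        rw [smul_smul, ← Complex.exp_add, neg_add_cancel, Complex.exp_zero, one_smul]
      rw [hee]
      rw [smul_add]
      congr 1
      rw [smul_smul, smul_smul, smul_smul]
      congr 1
      ring
    -- the memory integral equals (I g) • φ t
    have hint : (∫ s in (0:ℝ)..t, G (t - s) • ψ s) = (Complex.I * g) • φ t := by
      have h1 : (∫ s in (0:ℝ)..t, G (t - s) • ψ s)
          = ((g : ℂ) ^ 2 * Complex.exp (-(c * t))) • F t := by
        rw [hF, ← intervalIntegral.integral_smul]
        apply intervalIntegral.integral_congr
        intro s _
        show G (t - s) • ψ s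
          = ((g : ℂ) ^ 2 * Complex.exp (-(c * t))) • Complex.exp (c * s) • ψ s
        have h2 : Complex.exp (-((γ / 2 : ℝ) : ℂ) * ((t - s : ℝ) : ℂ)
              - Complex.I * (ε : ℂ) * ((t - s : ℝ) : ℂ))
            = Complex.exp (-(c * t)) * Complex.exp (c * s) := by
          rw [← Complex.exp_add]
          congr 1
          rw [hc]
          push_cast
          ring
        have hGs : G (t - s) = ((g : ℂ) ^ 2 * Complex.exp (-(c * t))) * Complex.exp (c * s) := by
          rw [hG (t - s), h2, mul_assoc]
        rw [smul_smul, hGs]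
      rw [h1, hφ2 t, smul_smul, smul_smul]
      congr 1
      linear_combination ((g : ℂ) ^ 2 * Complex.exp (-(c * t))) * Complex.I_sq
    have hψd : HasDerivAt ψ
        ((-Complex.I) • H_S.mulVec (ψ t) - (Complex.I * g) • φ t) t := by
      have := hψ t ht
      rwa [hint] at this
    -- derivative of E
    have hEd : HasDerivAt E (E t * (Complex.I • H_S)) t := hasDerivAt_expMat H_S t
    -- commutation
    have hcomm : E t * H_S = H_S * E t := by
      have : Commute ((Complex.I * (t : ℂ)) • H_S) H_S :=
        (Commute.refl H_S).smul_left _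
      exact this.exp_left.eq
    -- derivatives of the two components
    have h1 : HasDerivAt (fun u => (E u).mulVec (ψ u))
        ((E t * (Complex.I • H_S)).mulVec (ψ t)
          + (E t).mulVec ((-Complex.I) • H_S.mulVec (ψ t) - (Complex.I * g) • φ t)) t :=
      hasDerivAt_mulVec hEd hψd
    have h2 : HasDerivAt (fun u => (E u).mulVec (φ u))
        ((E t * (Complex.I • H_S)).mulVec (φ t)
          + (E t).mulVec ((-Complex.I * g) • ψ t + (-c) • φ t)) t :=
      hasDerivAt_mulVec hEd hφd
    -- assemble
    have hfun : ψtI = fun u => Sum.elim ((E u).mulVec (ψ u)) ((E u).mulVec (φ u)) :=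
      funext hψtI
    rw [hfun]
    have hSum : HasDerivAt (fun u => Sum.elim ((E u).mulVec (ψ u)) ((E u).mulVec (φ u)))
        (Sum.elim
          ((E t * (Complex.I • H_S)).mulVec (ψ t)
            + (E t).mulVec ((-Complex.I) • H_S.mulVec (ψ t) - (Complex.I * g) • φ t))
          ((E t * (Complex.I • H_S)).mulVec (φ t)
            + (E t).mulVec ((-Complex.I * g) • ψ t + (-c) • φ t))) t := by
      rw [hasDerivAt_pi]
      rintro (i | i)
      · exact hasDerivAt_pi.mp h1 i
      · exact hasDerivAt_pi.mp h2 i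
    -- identify the derivative
    have hsmulElim : ∀ (a : ℂ) (x y : Fin N → ℂ),
        a • (Sum.elim x y) = Sum.elim (a • x) (a • y) := by
      intro a x y; funext z; cases z <;> rfl
    have hEq : (-Complex.I) • HIeff.mulVec ((fun u =>
          Sum.elim ((E u).mulVec (ψ u)) ((E u).mulVec (φ u))) t)
        = Sum.elim
          ((E t * (Complex.I • H_S)).mulVec (ψ t)
            + (E t).mulVec ((-Complex.I) • H_S.mulVec (ψ t) - (Complex.I * g) • φ t))
          ((E t * (Complex.I • H_S)).mulVec (φ t)
            + (E t).mulVec ((-Complex.I * g) • ψ t + (-c) • φ t)) := by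
      rw [hHIeff]
      have harg : (fun u => Sum.elim ((E u).mulVec (ψ u)) ((E u).mulVec (φ u))) t
          = Sum.elim ((E t).mulVec (ψ t)) ((E t).mulVec (φ t)) := rfl
      rw [harg, Matrix.fromBlocks_mulVec]
      simp only [Sum.elim_comp_inl, Sum.elim_comp_inr]
      rw [hsmulElim]
      refine congrArg₂ Sum.elim ?_ ?_
      · -- top block
        rw [Matrix.zero_mulVec, Matrix.smul_mulVec, Matrix.one_mulVec, zero_add]
        rw [← Matrix.mulVec_mulVec, Matrix.smul_mulVec]
        rw [Matrix.mulVec_sub, Matrix.mulVec_smul, Matrix.mulVec_smul, Matrix.mulVec_smul]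
        module
      · -- bottom block
        rw [Matrix.smul_mulVec, Matrix.one_mulVec]
        rw [Matrix.add_mulVec, Matrix.neg_mulVec, Matrix.smul_mulVec, Matrix.one_mulVec]
        rw [← Matrix.mulVec_mulVec (M := E t) (N := Complex.I • H_S), Matrix.smul_mulVec]
        rw [Matrix.mulVec_add]
        simp only [Matrix.mulVec_smul]
        rw [Matrix.mulVec_mulVec, ← hcomm, ← Matrix.mulVec_mulVec]
        simp only [hc]
        match_scalars <;>
          first
          | ring1
          | linear_combination (((γ : ℝ) : ℂ) / 2) * Complex.I_sq
          | (push_cast; linear_combination (((γ : ℝ) : ℂ) / 2) * Complex.I_sq)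
    rw [hEq]
    exact hSum
  · rw [hψtI 0]
    have h0 : ((Complex.I * (0 : ℝ)) • H_S) = 0 := by push_cast; simp
    rw [h0, NormedSpace.exp_zero, Matrix.one_mulVec]
    have hφ0 : φ 0 = 0 := by
      rw [hφ2 0, hF]
      simp
    rw [hφ0, Matrix.mulVec_zero]
end
end

section
/- Let g > 0, γ > 0 and ΔE ∈ ℝ. Consider the quadratic polynomial p(λ) = λ² + (γ/2 - iΔE)λ + g² over ℂ (the characteristic polynomial of the matrix [[0, -ig], [-ig, iΔE - γ/2]]). Set r = (√2/4)·√( (γ/2)² - 4g² - (ΔE)² + √( ((γ/2 + 2g)² + (ΔE)²)·((γ/2 - 2g)² + (ΔE)²) ) ). Then the expression under each square root is nonnegative, every complex root λ of p satisfies Re λ = -γ/4 + r or Re λ = -γ/4 - r, and each of these two values is the real part of some root of p. -/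
open Complex

noncomputable section

lemma sq_inj' {a b : ℝ} (ha : 0 ≤ a) (hb : 0 ≤ b) (h : a ^ 2 = b ^ 2) : a = b := by
  apply le_antisymm <;> nlinarith

theorem stmt2 (g γ ΔE : ℝ) (hg : 0 < g) (hγ : 0 < γ)
    (p : ℂ → ℂ)
    (hp : ∀ z : ℂ, p z = z ^ 2 + ((γ / 2 : ℝ) - Complex.I * ΔE) * z + (g : ℂ) ^ 2)
    (r : ℝ)
    (hr : r = (Real.sqrt 2 / 4) * Real.sqrt ((γ / 2) ^ 2 - 4 * g ^ 2 - ΔE ^ 2 +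
      Real.sqrt (((γ / 2 + 2 * g) ^ 2 + ΔE ^ 2) * ((γ / 2 - 2 * g) ^ 2 + ΔE ^ 2)))) :
    (0 ≤ ((γ / 2 + 2 * g) ^ 2 + ΔE ^ 2) * ((γ / 2 - 2 * g) ^ 2 + ΔE ^ 2)) ∧
    (0 ≤ (γ / 2) ^ 2 - 4 * g ^ 2 - ΔE ^ 2 +
      Real.sqrt (((γ / 2 + 2 * g) ^ 2 + ΔE ^ 2) * ((γ / 2 - 2 * g) ^ 2 + ΔE ^ 2))) ∧
    (∀ z : ℂ, p z = 0 → z.re = -γ / 4 + r ∨ z.re = -γ / 4 - r) ∧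
    (∃ z : ℂ, p z = 0 ∧ z.re = -γ / 4 + r) ∧
    (∃ z : ℂ, p z = 0 ∧ z.re = -γ / 4 - r) := by
  have hprodnn : (0 : ℝ) ≤ ((γ / 2 + 2 * g) ^ 2 + ΔE ^ 2) * ((γ / 2 - 2 * g) ^ 2 + ΔE ^ 2) :=
    by positivity
  set A : ℝ := (γ / 2) ^ 2 - 4 * g ^ 2 - ΔE ^ 2 with hAdef
  set B : ℝ := -(γ * ΔE) with hBdef
  clear_value A B
  have hprod : ((γ / 2 + 2 * g) ^ 2 + ΔE ^ 2) * ((γ / 2 - 2 * g) ^ 2 + ΔE ^ 2)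
      = A ^ 2 + B ^ 2 := by rw [hAdef, hBdef]; ring
  have hM0 : (0 : ℝ) ≤ A ^ 2 + B ^ 2 := by positivity
  set M : ℝ := Real.sqrt (A ^ 2 + B ^ 2) with hMdef
  clear_value M
  have hM : M ^ 2 = A ^ 2 + B ^ 2 := by rw [hMdef]; exact Real.sq_sqrt hM0
  have hMA : |A| ≤ M := by
    have h := Real.sqrt_le_sqrt (show A ^ 2 ≤ A ^ 2 + B ^ 2 by nlinarith)
    rwa [Real.sqrt_sq_eq_abs, ← hMdef] at h
  have h1 : 0 ≤ M + A := by have := neg_abs_le A; linarith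
  have h2 : 0 ≤ M - A := by have := le_abs_self A; linarith
  have h1' : (0:ℝ) ≤ (M + A) / 2 := by linarith
  have h2' : (0:ℝ) ≤ (M - A) / 2 := by linarith
  set u : ℝ := Real.sqrt ((M + A) / 2) with hudef
  set v : ℝ := Real.sqrt ((M - A) / 2) with hvdef
  clear_value u v
  have hu2 : u ^ 2 = (M + A) / 2 := by rw [hudef]; exact Real.sq_sqrt h1'
  have hv2 : v ^ 2 = (M - A) / 2 := by rw [hvdef]; exact Real.sq_sqrt h2'
  have hu0 : 0 ≤ u := hudef ▸ Real.sqrt_nonneg _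
  have hv0 : 0 ≤ v := hvdef ▸ Real.sqrt_nonneg _
  have huv : 2 * (u * v) = |B| := by
    have h3 : u * v = Real.sqrt ((M + A) / 2 * ((M - A) / 2)) := by
      rw [hudef, hvdef]; exact (Real.sqrt_mul h1' _).symm
    have h4 : (M + A) / 2 * ((M - A) / 2) = (B / 2) ^ 2 := by linear_combination hM / 4
    rw [h3, h4, Real.sqrt_sq_eq_abs, abs_div]
    rw [show |(2:ℝ)| = 2 from abs_of_pos two_pos]
    ring
  -- r = u / 2
  have hr' : r = u / 2 := by
    rw [hr, hprod, ← hMdef]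
    apply sq_inj' (by positivity) (by positivity)
    have hsq2 : Real.sqrt 2 ^ 2 = 2 := Real.sq_sqrt (by norm_num)
    have hAM : Real.sqrt (A + M) ^ 2 = A + M := Real.sq_sqrt (by linarith)
    rw [mul_pow, div_pow, hsq2, div_pow, hu2, hAM]
    ring
  set w : ℝ := if 0 ≤ B then v else -v with hwdef
  clear_value w
  have hw2 : w ^ 2 = v ^ 2 := by rw [hwdef]; split_ifs <;> ring
  have hRe : u ^ 2 - w ^ 2 = A := by rw [hw2]; linarith
  have hIm : 2 * (u * w) = B := by
    rw [hwdef]; split_ifs with h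
    · rw [huv]; exact abs_of_nonneg h
    · push_neg at h
      rw [abs_of_neg h] at huv
      have h7 : 2 * (u * -v) = -(2 * (u * v)) := by ring
      rw [h7, huv, neg_neg]
  clear hudef hvdef hwdef hM hMA h2 h1' h2' huv hu2 hv2 hw2
  -- complex square root s of b^2 - 4g^2
  set b : ℂ := ((γ / 2 : ℝ) : ℂ) - Complex.I * (ΔE : ℂ) with hbdef
  set s : ℂ := (u : ℂ) + (w : ℂ) * Complex.I with hsdef
  clear_value b s
  have hbre : b.re = γ / 2 := by rw [hbdef]; simp
  have hsre : s.re = u := by rw [hsdef]; simp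
  have hs2 : s ^ 2 = b ^ 2 - 4 * (g : ℂ) ^ 2 := by
    rw [hsdef, hbdef]
    apply Complex.ext
    · simp [pow_two, Complex.mul_re, Complex.mul_im]
      rw [hAdef] at hRe; linear_combination hRe
    · simp [pow_two, Complex.mul_re, Complex.mul_im]
      rw [hBdef] at hIm; linear_combination hIm
  set zp : ℂ := (-b + s) / 2 with hzp
  set zm : ℂ := (-b - s) / 2 with hzm
  clear_value zp zm
  have hfac : ∀ z : ℂ, p z = (z - zp) * (z - zm) := by
    intro z
    rw [hp, hzp, hzm]
    linear_combination (1 / 4 : ℂ) * hs2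
  have hzpre : zp.re = -γ / 4 + r := by
    have h5 : (2 : ℂ) * zp = -b + s := by rw [hzp]; ring
    have h6 := congrArg Complex.re h5
    simp [Complex.mul_re, hsre, hbre] at h6
    rw [hr']; linarith
  have hzmre : zm.re = -γ / 4 - r := by
    have h5 : (2 : ℂ) * zm = -b - s := by rw [hzm]; ring
    have h6 := congrArg Complex.re h5
    simp [Complex.mul_re, hsre, hbre] at h6
    rw [hr']; linarith
  refine ⟨hprodnn, ?_, ?_, ?_, ?_⟩
  · rw [hprod, ← hMdef]; linarith
  · intro z hz
    rw [hfac z] at hz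
    rcases mul_eq_zero.mp hz with h | h
    · left; rw [sub_eq_zero.mp h]; exact hzpre
    · right; rw [sub_eq_zero.mp h]; exact hzmre
  · exact ⟨zp, by rw [hfac]; ring, hzpre⟩
  · exact ⟨zm, by rw [hfac]; ring, hzmre⟩

end
end

section
/- Let N ≥ 1, let H_S be an N×N Hermitian complex matrix, let g > 0, γ > 0, ε ∈ ℝ. Set A = (γ/2)I_N - i(H_S - ε I_N) and Y(t) = g² A^{-1}(I_N - e^{-At}). Let ψ₀ ∈ ℂ be a constant, let ψ_I : ℝ → ℂ^N satisfy ψ_I'(t) = -Y(t)ψ_I(t), let σ : ℝ → M_N(ℂ) satisfy σ'(t) = -Y(t)σ(t) - σ(t)Y(t)†, and set ρ₀₀(t) = 1 - Tr σ(t). Set Ŷ(t) = 0 ⊕ Y(t) as an (N+1)×(N+1) matrix. Then ρ_SI(t) = ρ₀₀(t)|0⟩⟨0| + conj(ψ₀)|ψ_I(t)⟩⟨0| + ψ₀|0⟩⟨ψ_I(t)| + (0 ⊕ σ(t)) satisfies the non-Markovian Redfield equation dρ_SI/dt = |0⟩⟨0|·Tr(Ŷ(t)ρ_SI(t)) - Ŷ(t)ρ_SI(t)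 + |0⟩⟨0|·Tr(ρ_SI(t)Ŷ(t)†) - ρ_SI(t)Ŷ(t)†. -/
open Matrix Complex

noncomputable section

theorem stmt9 (N : ℕ) (hN : 1 ≤ N)
    (H_S : Matrix (Fin N) (Fin N) ℂ) (hH : H_S.IsHermitian)
    (g γ ε : ℝ) (hg : 0 < g) (hγ : 0 < γ)
    (A : Matrix (Fin N) (Fin N) ℂ)
    (hA : A = ((γ / 2 : ℝ) : ℂ) • (1 : Matrix (Fin N) (Fin N) ℂ)
      - Complex.I • (H_S - (ε : ℂ) • 1))
    (Y : ℝ → Matrix (Fin N) (Fin N) ℂ)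
    (hY : ∀ t : ℝ, Y t = ((g : ℂ) ^ 2) • (A⁻¹ * (1 - NormedSpace.exp ((-(t : ℂ)) • A))))
    (e₀ : Unit ⊕ Fin N → ℂ) (he₀ : e₀ = Sum.elim (fun _ => 1) 0)
    (emb : (Fin N → ℂ) → (Unit ⊕ Fin N → ℂ))
    (hemb : ∀ v, emb v = Sum.elim (fun _ => 0) v)
    (ψ₀ : ℂ)
    (ψI : ℝ → Fin N → ℂ)
    (hψI : ∀ t : ℝ, HasDerivAt ψI (-(Y t).mulVec (ψI t)) t)
    (σ : ℝ → Matrix (Fin N) (Fin N) ℂ)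
    (hσ : ∀ t : ℝ, ∀ i j, HasDerivAt (fun τ => σ τ i j)
      ((-(Y t * σ t) - σ t * (Y t)ᴴ) i j) t)
    (ρ₀₀ : ℝ → ℂ) (hρ₀₀ : ∀ t, ρ₀₀ t = 1 - (σ t).trace)
    (Yhat : ℝ → Matrix (Unit ⊕ Fin N) (Unit ⊕ Fin N) ℂ)
    (hYhat : ∀ t, Yhat t = Matrix.fromBlocks 0 0 0 (Y t))
    (ρSI : ℝ → Matrix (Unit ⊕ Fin N) (Unit ⊕ Fin N) ℂ)
    (hρSI : ∀ t : ℝ, ρSI t =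
      ρ₀₀ t • Matrix.vecMulVec e₀ (star e₀)
      + (starRingEnd ℂ ψ₀) • Matrix.vecMulVec (emb (ψI t)) (star e₀)
      + ψ₀ • Matrix.vecMulVec e₀ (star (emb (ψI t)))
      + Matrix.fromBlocks 0 0 0 (σ t)) :
    ∀ t : ℝ, ∀ i j, HasDerivAt (fun τ => ρSI τ i j)
      ((((Yhat t * ρSI t).trace) • Matrix.vecMulVec e₀ (star e₀)
        - Yhat t * ρSI t
        + ((ρSI t * (Yhat t)ᴴ).trace) • Matrix.vecMulVec e₀ (star e₀)
        - ρSI t * (Yhat t)ᴴ) i j) t := by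
  intro t i j
  have hψk : ∀ k, HasDerivAt (fun τ => ψI τ k) ((-(Y t).mulVec (ψI t)) k) t :=
    hasDerivAt_pi.mp (hψI t)
  have hσtr : HasDerivAt (fun τ => (σ τ).trace) ((-(Y t * σ t) - σ t * (Y t)ᴴ).trace) t := by
    simp only [Matrix.trace, Matrix.diag]
    exact HasDerivAt.fun_sum (fun k _ => hσ t k k)
  have hρ₀₀' : HasDerivAt ρ₀₀ (-((-(Y t * σ t) - σ t * (Y t)ᴴ).trace)) t := by
    have h : ρ₀₀ = fun τ => 1 - (σ τ).trace := funext hρ₀₀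
    rw [h]
    exact hσtr.const_sub 1
  have hemb' : ∀ k, HasDerivAt (fun τ => emb (ψI τ) k) (emb (-(Y t).mulVec (ψI t)) k) t := by
    intro k
    rcases k with k | k
    · simp only [hemb, Sum.elim_inl]
      exact hasDerivAt_const t 0
    · simpa only [hemb, Sum.elim_inr] using hψk k
  have hFB : ∀ i j, HasDerivAt (fun τ => Matrix.fromBlocks (0 : Matrix Unit Unit ℂ) 0 0 (σ τ) i j)
      (Matrix.fromBlocks 0 0 0 (-(Y t * σ t) - σ t * (Y t)ᴴ) i j) t := by
    intro i j
    rcases i with i | i <;> rcases j with j | j <;>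
      simp only [Matrix.fromBlocks_apply₁₁, Matrix.fromBlocks_apply₁₂,
        Matrix.fromBlocks_apply₂₁, Matrix.fromBlocks_apply₂₂, Matrix.zero_apply]
    · exact hasDerivAt_const t 0
    · exact hasDerivAt_const t 0
    · exact hasDerivAt_const t 0
    · exact hσ t i j
  -- matrix identities
  have hm1 : Yhat t * ρSI t = (starRingEnd ℂ ψ₀) • Matrix.vecMulVec (emb ((Y t).mulVec (ψI t))) (star e₀)
      + Matrix.fromBlocks 0 0 0 (Y t * σ t) := by
    ext k l
    rcases k with k | k <;> rcases l with l | l <;>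
      simp [hYhat, hρSI, Matrix.mul_apply, Fintype.sum_sum_type, he₀, hemb,
        Matrix.vecMulVec_apply, Matrix.mulVec, dotProduct, Finset.mul_sum,
        mul_comm, mul_left_comm, mul_assoc]
  have hm2 : ρSI t * (Yhat t)ᴴ = ψ₀ • Matrix.vecMulVec e₀ (star (emb ((Y t).mulVec (ψI t))))
      + Matrix.fromBlocks 0 0 0 (σ t * (Y t)ᴴ) := by
    ext k l
    rcases k with k | k <;> rcases l with l | l <;>
      simp [hYhat, hρSI, Matrix.mul_apply, Fintype.sum_sum_type, he₀, hemb,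
        Matrix.vecMulVec_apply, Matrix.mulVec, dotProduct, Finset.mul_sum,
        Matrix.conjTranspose_apply, map_sum, mul_comm, mul_left_comm, mul_assoc]
  have htr1 : (Yhat t * ρSI t).trace = (Y t * σ t).trace := by
    rw [hm1]
    simp [Matrix.trace, Matrix.diag, Fintype.sum_sum_type, he₀, hemb,
      Matrix.vecMulVec_apply]
  have htr2 : (ρSI t * (Yhat t)ᴴ).trace = (σ t * (Y t)ᴴ).trace := by
    rw [hm2]
    simp [Matrix.trace, Matrix.diag, Fintype.sum_sum_type, he₀, hemb,
      Matrix.vecMulVec_apply]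
  have hembneg : emb (-(Y t).mulVec (ψI t)) = -emb ((Y t).mulVec (ψI t)) := by
    funext k; rcases k with k | k <;> simp [hemb]
  have hfinal : ((Yhat t * ρSI t).trace) • Matrix.vecMulVec e₀ (star e₀)
        - Yhat t * ρSI t
        + ((ρSI t * (Yhat t)ᴴ).trace) • Matrix.vecMulVec e₀ (star e₀)
        - ρSI t * (Yhat t)ᴴ
      = (-((-(Y t * σ t) - σ t * (Y t)ᴴ).trace)) • Matrix.vecMulVec e₀ (star e₀)
        + (starRingEnd ℂ ψ₀) • Matrix.vecMulVec (emb (-(Y t).mulVec (ψI t))) (star e₀)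
        + ψ₀ • Matrix.vecMulVec e₀ (star (emb (-(Y t).mulVec (ψI t))))
        + Matrix.fromBlocks 0 0 0 (-(Y t * σ t) - σ t * (Y t)ᴴ) := by
    rw [htr1, htr2, hm1, hm2, hembneg]
    have hfb : (Matrix.fromBlocks 0 0 0 (-(Y t * σ t) - σ t * (Y t)ᴴ) : Matrix (Unit ⊕ Fin N) (Unit ⊕ Fin N) ℂ)
        = -Matrix.fromBlocks 0 0 0 (Y t * σ t) - Matrix.fromBlocks 0 0 0 (σ t * (Y t)ᴴ) := by
      ext k l
      rcases k with k | k <;> rcases l with l | l <;> simp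
    have hv1 : ∀ (v w : Unit ⊕ Fin N → ℂ), Matrix.vecMulVec (-v) w = -Matrix.vecMulVec v w := by
      intro v w; ext k l; simp [Matrix.vecMulVec_apply]
    have hv2 : ∀ (v w : Unit ⊕ Fin N → ℂ), Matrix.vecMulVec v (-w) = -Matrix.vecMulVec v w := by
      intro v w; ext k l; simp [Matrix.vecMulVec_apply]
    rw [hfb]
    simp only [star_neg, hv1, hv2, smul_neg, Matrix.trace_sub, Matrix.trace_neg, neg_sub,
      sub_neg_eq_add, neg_neg, add_smul]
    abel
  rw [hfinal]
  have hfun : (fun τ => ρSI τ i j)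
      = fun τ => ρ₀₀ τ * (e₀ i * star (e₀ j))
        + (starRingEnd ℂ ψ₀) * (emb (ψI τ) i * star (e₀ j))
        + ψ₀ * (e₀ i * star (emb (ψI τ) j))
        + Matrix.fromBlocks 0 0 0 (σ τ) i j := by
    funext τ
    simp [hρSI, Matrix.vecMulVec_apply, mul_assoc]
  rw [hfun]
  simp only [Matrix.add_apply, Matrix.smul_apply, Matrix.vecMulVec_apply, smul_eq_mul,
    Pi.star_apply, mul_assoc]
  exact (((hρ₀₀'.mul_const _).add (((hemb' i).mul_const _).const_mul _)).add
    (((hemb' j).star.const_mul _).const_mul _)).add (hFB i j)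
end
end

section
/- Let a₁, a₂, a₃, x ∈ ℝ. Every complex root λ of the cubic polynomial f(λ) = λ³ + a₁λ² + a₂λ + a₃ satisfies Re λ < x if and only if the following three inequalities hold: a₁ > -3x, (a₁ + 3x)(a₂ + 2a₁x + 3x²) > a₃ + a₂x + a₁x² + x³, and a₃ + a₂x + a₁x² + x³ > 0. -/
open Complex

private lemma hurwitz0 (b₁ b₂ b₃ : ℝ) :
    (∀ z : ℂ, z ^ 3 + (b₁ : ℂ) * z ^ 2 + (b₂ : ℂ) * z + (b₃ : ℂ) = 0 → z.re < 0) ↔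
    (b₁ > 0 ∧ b₁ * b₂ > b₃ ∧ b₃ > 0) := by
  constructor
  · intro h
    obtain ⟨r, hr⟩ : ∃ r : ℝ, r ^ 3 + b₁ * r ^ 2 + b₂ * r + b₃ = 0 := by
      set g : ℝ → ℝ := fun t => t ^ 3 + b₁ * t ^ 2 + b₂ * t + b₃ with hg
      have hcont : Continuous g := by continuity
      set M : ℝ := 1 + |b₁| + |b₂| + |b₃| with hM
      have h1 : |b₁| ≥ 0 := abs_nonneg _
      have h2 : |b₂| ≥ 0 := abs_nonneg _
      have h3 : |b₃| ≥ 0 := abs_nonneg _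
      have hb1 : b₁ ≤ |b₁| := le_abs_self _
      have hb1' : -|b₁| ≤ b₁ := neg_abs_le _
      have hb2 : b₂ ≤ |b₂| := le_abs_self _
      have hb2' : -|b₂| ≤ b₂ := neg_abs_le _
      have hb3 : b₃ ≤ |b₃| := le_abs_self _
      have hb3' : -|b₃| ≤ b₃ := neg_abs_le _
      have hneg : g (-M) ≤ 0 := by simp only [hg]; nlinarith
      have hpos : (0:ℝ) ≤ g M := by simp only [hg]; nlinarith
      have hle : (-M : ℝ) ≤ M := by simp [hM]; linarith
      obtain ⟨r, _, hrr⟩ := intermediate_value_Icc hle hcont.continuousOn ⟨hneg, hpos⟩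
      exact ⟨r, hrr⟩
    have hrneg : r < 0 := by
      have := h (r : ℂ) (by exact_mod_cast congrArg (Complex.ofReal) hr)
      simpa using this
    set p : ℝ := b₁ + r with hp
    set q : ℝ := b₂ + b₁ * r + r ^ 2 with hq
    have hb3 : b₃ = -r * q := by rw [hq]; linarith [hr]
    have hfac : ∀ z : ℂ, z ^ 3 + (b₁ : ℂ) * z ^ 2 + (b₂ : ℂ) * z + (b₃ : ℂ)
        = (z - r) * (z ^ 2 + (p : ℂ) * z + (q : ℂ)) := by
      intro z
      have hrC : (r:ℂ) ^ 3 + (b₁:ℂ) * (r:ℂ) ^ 2 + (b₂:ℂ) * (r:ℂ) + (b₃:ℂ) = 0 := by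
        exact_mod_cast congrArg (Complex.ofReal) hr
      rw [hp, hq]
      push_cast
      linear_combination hrC
    have hpq : p > 0 ∧ q > 0 := by
      rcases le_or_gt (p ^ 2) (4 * q) with hd | hd
      · set β : ℝ := Real.sqrt (4 * q - p ^ 2) / 2 with hβ
        have hβ2 : β ^ 2 = (4 * q - p ^ 2) / 4 := by
          rw [hβ, div_pow, Real.sq_sqrt (by linarith)]; ring
        set z₀ : ℂ := ⟨-p / 2, β⟩ with hz₀
        have hroot : z₀ ^ 2 + (p : ℂ) * z₀ + (q : ℂ) = 0 := by
          apply Complex.ext <;>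
            simp [hz₀, pow_succ, Complex.mul_re, Complex.mul_im] <;> nlinarith [hβ2]
        have := h z₀ (by rw [hfac, hroot, mul_zero])
        have hp0 : p > 0 := by simp [hz₀] at this; linarith
        exact ⟨hp0, by nlinarith⟩
      · set s : ℝ := Real.sqrt (p ^ 2 - 4 * q) with hs
        have hs2 : s ^ 2 = p ^ 2 - 4 * q := Real.sq_sqrt (by linarith)
        have hroot : ∀ t : ℝ, t ^ 2 + p * t + q = 0 →
            ((t : ℂ) ^ 3 + (b₁ : ℂ) * (t:ℂ) ^ 2 + (b₂ : ℂ) * (t:ℂ) + (b₃ : ℂ) = 0) := by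
          intro t ht
          rw [hfac]
          have : ((t : ℂ) ^ 2 + (p : ℂ) * t + (q : ℂ)) = 0 := by
            exact_mod_cast congrArg (Complex.ofReal) ht
          rw [this, mul_zero]
        have hr₁ : ((-p + s) / 2) ^ 2 + p * ((-p + s) / 2) + q = 0 := by
          linear_combination (1/4 : ℝ) * hs2
        have hr₂ : ((-p - s) / 2) ^ 2 + p * ((-p - s) / 2) + q = 0 := by
          linear_combination (1/4 : ℝ) * hs2
        have h₁ := h _ (hroot _ hr₁)
        have h₂ := h _ (hroot _ hr₂)
        simp only [Complex.ofReal_re] at h₁ h₂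
        refine ⟨by linarith, ?_⟩
        nlinarith [mul_pos (neg_pos.mpr h₁) (neg_pos.mpr h₂), hr₁, hr₂]
    obtain ⟨hp0, hq0⟩ := hpq
    refine ⟨by rw [hp] at hp0; linarith, ?_, by nlinarith [hb3]⟩
    have hkey : b₁ * b₂ - b₃ = p * (q - p * r + r ^ 2) := by rw [hb3, hp, hq]; ring
    nlinarith [hkey, mul_pos hp0 hq0, mul_pos (mul_pos hp0 hp0) (neg_pos.mpr hrneg),
      mul_nonneg hp0.le (sq_nonneg r)]
  · rintro ⟨h1, h2, h3⟩ z hz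
    have hb2 : b₂ > 0 := by nlinarith
    have hre := congrArg Complex.re hz
    have him := congrArg Complex.im hz
    simp [pow_succ, Complex.mul_re, Complex.mul_im, Complex.add_re, Complex.add_im] at hre him
    set α := z.re
    set β := z.im
    by_contra hc
    push_neg at hc
    have hfac : β * (3 * α ^ 2 + 2 * b₁ * α + b₂ - β ^ 2) = 0 := by linear_combination him
    rcases mul_eq_zero.mp hfac with hh | hh
    · rw [hh] at hre
      nlinarith [hre]
    · have hb : β ^ 2 = 3 * α ^ 2 + 2 * b₁ * α + b₂ := by linarith
      nlinarith [hre, sq_nonneg β, sq_nonneg α, mul_nonneg hc h1.le]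

theorem stmt11 (a₁ a₂ a₃ x : ℝ) :
    (∀ z : ℂ, z ^ 3 + (a₁ : ℂ) * z ^ 2 + (a₂ : ℂ) * z + (a₃ : ℂ) = 0 → z.re < x) ↔
    (a₁ > -3 * x ∧
      (a₁ + 3 * x) * (a₂ + 2 * a₁ * x + 3 * x ^ 2) > a₃ + a₂ * x + a₁ * x ^ 2 + x ^ 3 ∧
      a₃ + a₂ * x + a₁ * x ^ 2 + x ^ 3 > 0) := by
  have key : ∀ w : ℂ, w ^ 3 + ((a₁ + 3 * x : ℝ) : ℂ) * w ^ 2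
      + ((a₂ + 2 * a₁ * x + 3 * x ^ 2 : ℝ) : ℂ) * w
      + ((a₃ + a₂ * x + a₁ * x ^ 2 + x ^ 3 : ℝ) : ℂ)
      = (w + x) ^ 3 + (a₁ : ℂ) * (w + x) ^ 2 + (a₂ : ℂ) * (w + x) + (a₃ : ℂ) := by
    intro w; push_cast; ring
  rw [show (a₁ > -3 * x) ↔ (a₁ + 3 * x > 0) by constructor <;> intro <;> linarith]
  rw [← hurwitz0 (a₁ + 3 * x) (a₂ + 2 * a₁ * x + 3 * x ^ 2) (a₃ + a₂ * x + a₁ * x ^ 2 + x ^ 3)]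
  constructor
  · intro h w hw
    rw [key] at hw
    have := h (w + x) hw
    simp only [Complex.add_re, Complex.ofReal_re] at this
    linarith
  · intro h z hz
    have hzw : ((z - x) + (x:ℂ)) = z := by ring
    have := h (z - x) (by rw [key, hzw]; exact hz)
    simp only [Complex.sub_re, Complex.ofReal_re] at this
    linarith
end
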